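/- arXiv:2103.01577 — 2 statements merged into one kernel-verified Lean document; each statement's English description precedes it below -/
import Mathlib

section
/- Let t ∈ [0,T]. Then ∫_t^T f(t,u) du + ∫_{(t,T]} g(t,u) μ_t(du) = ∫_0^T f₀(u) du − ∫_0^t f(u,u) du + ∫_{(0,t]} ( ā(v,T) + ᾱ(v,T) ) ν(dv) + ∫_{[0,t]×[0,T]} 1_{{u>s}} g(s,u) μ(ds,du) − ∫_{(0,t]} g(u−,u) μ̄(du). (This is the representation of Lemma 3.2 of the paper — the exponent of the credit risky bond price P(t,T) = exp(−∫_t^T f(t,u)du − ∫_{(t,T]} g(t,u)μ_t(du)) — in the finite-variation case, i.e. with the martingale driver X ≡ 0 and the Stieltjes measure of the increasing process A given by ν.) -/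
open MeasureTheory Set

private lemma bdd_integrable {X : Type*} [MeasurableSpace X] {μ : Measure X}
    [IsFiniteMeasure μ] {f : X → ℝ} (hf : AEStronglyMeasurable f μ) {C : ℝ}
    (h : ∀ x, |f x| ≤ C) : Integrable f μ :=
  (integrable_const C).mono' hf (Filter.Eventually.of_forall fun x => by
    simpa [Real.norm_eq_abs] using h x)

private lemma bdd_abs_integral {X : Type*} [MeasurableSpace X] (μ : Measure X)
    [IsFiniteMeasure μ] (f : X → ℝ) {C : ℝ}
    (h : ∀ x, |f x| ≤ C) : |∫ x, f x ∂μ| ≤ C * (μ univ).toReal := by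
  simpa [Real.norm_eq_abs, Measure.real] using
    norm_integral_le_of_norm_le_const (μ := μ) (f := f)
      (Filter.Eventually.of_forall fun x => by simpa [Real.norm_eq_abs] using h x)

private lemma bdd_abs_setIntegral {X : Type*} [MeasurableSpace X] (μ : Measure X)
    [IsFiniteMeasure μ] (f : X → ℝ) {C : ℝ} (hC : 0 ≤ C)
    (h : ∀ x, |f x| ≤ C) (s : Set X) : |∫ x in s, f x ∂μ| ≤ C * (μ univ).toReal := by
  refine (bdd_abs_integral (μ.restrict s) f h).trans
    (mul_le_mul_of_nonneg_left ?_ hC)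
  refine ENNReal.toReal_mono (measure_ne_top μ univ) ?_
  simpa [Measure.restrict_apply_univ] using measure_mono (subset_univ s)

/-- Representation of the exponent of the credit risky bond price
(Lemma 3.2 of the paper) in the finite-variation case: the martingale driver
`X ≡ 0` and the Stieltjes measure of the increasing process `A` is `ν`. -/
theorem bond_exponent_representation
    (T : ℝ) (hT : 0 < T)
    (μ : Measure (ℝ × ℝ)) [IsFiniteMeasure μ]
    (hμsupp : μ ((Icc 0 T ×ˢ Icc 0 T)ᶜ) = 0)
    (hμdiag : μ {p : ℝ × ℝ | p.2 ≤ p.1} = 0)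
    (ν : Measure ℝ) [IsFiniteMeasure ν]
    (hν0 : ν {0} = 0) (hνsupp : ν ((Icc 0 T)ᶜ) = 0)
    (f₀ : ℝ → ℝ) (hf₀meas : Measurable f₀) (C₀ : ℝ) (hf₀bdd : ∀ u, |f₀ u| ≤ C₀)
    (a : ℝ → ℝ → ℝ) (hameas : Measurable (Function.uncurry a))
    (Ca : ℝ) (habdd : ∀ v u, |a v u| ≤ Ca)
    (ha0 : ∀ v u, u < v → a v u = 0)
    (g₀ : ℝ → ℝ) (hg₀meas : Measurable g₀) (D₀ : ℝ) (hg₀bdd : ∀ u, |g₀ u| ≤ D₀)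
    (α : ℝ → ℝ → ℝ) (hαmeas : Measurable (Function.uncurry α))
    (Cα : ℝ) (hαbdd : ∀ v u, |α v u| ≤ Cα)
    (hα0 : ∀ v u, u < v → α v u = 0)
    (f : ℝ → ℝ → ℝ) (hf : ∀ t u, f t u = f₀ u + ∫ v in Ioc 0 t, a v u ∂ν)
    (g : ℝ → ℝ → ℝ) (hg : ∀ t u, g t u = g₀ u + ∫ v in Ioc 0 t, α v u ∂ν)
    (gm : ℝ → ℝ) (hgm : ∀ u, gm u = g₀ u + ∫ v in Ioo 0 u, α v u ∂ν)
    (abar : ℝ → ℝ) (habar : ∀ v, abar v = ∫ u in v..T, a v u)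
    (αbar : ℝ → ℝ) (hαbar : ∀ v, αbar v = ∫ p in (Ico 0 v ×ˢ Ioc v T), α v p.2 ∂μ)
    (t : ℝ) (ht : t ∈ Icc 0 T) :
    (∫ u in t..T, f t u) + (∫ p in (Icc 0 t ×ˢ Ioc t T), g t p.2 ∂μ)
      = (∫ u in (0:ℝ)..T, f₀ u) - (∫ u in (0:ℝ)..t, f u u)
        + (∫ v in Ioc 0 t, (abar v + αbar v) ∂ν)
        + (∫ p in (Icc 0 t ×ˢ Icc 0 T), (if p.1 < p.2 then g p.1 p.2 else 0) ∂μ)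
        - (∫ p in (Icc 0 T ×ˢ Ioc 0 t), gm p.2 ∂μ) := by
  obtain ⟨ht0, htT⟩ := ht
  have hCα : 0 ≤ Cα := (abs_nonneg _).trans (hαbdd 0 0)
  have hD₀ : 0 ≤ D₀ := (abs_nonneg _).trans (hg₀bdd 0)
  have hCν : (0:ℝ) ≤ Cα * (ν univ).toReal := mul_nonneg hCα ENNReal.toReal_nonneg
  have hαV : ∀ u, Measurable fun v => α v u := fun u =>
    hαmeas.comp (measurable_id.prodMk measurable_const)
  have hIntαV : ∀ (u : ℝ) (s : Set ℝ), IntegrableOn (fun v => α v u) s ν := fun u s =>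
    bdd_integrable (hαV u).aestronglyMeasurable (fun v => hαbdd v u)
  have hgbdd : ∀ s u, |g s u| ≤ D₀ + Cα * (ν univ).toReal := fun s u => by
    rw [hg]
    exact (abs_add_le _ _).trans (add_le_add (hg₀bdd u)
      (bdd_abs_setIntegral ν _ hCα (fun v => hαbdd v u) _))
  have hgmbdd : ∀ u, |gm u| ≤ D₀ + Cα * (ν univ).toReal := fun u => by
    rw [hgm]
    exact (abs_add_le _ _).trans (add_le_add (hg₀bdd u)
      (bdd_abs_setIntegral ν _ hCα (fun v => hαbdd v u) _))
  -- measurable sets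
  have hSE : MeasurableSet (Icc 0 t ×ˢ Ioc t T : Set (ℝ×ℝ)) :=
    measurableSet_Icc.prod measurableSet_Ioc
  have hSG : MeasurableSet (Icc 0 t ×ˢ Icc 0 T : Set (ℝ×ℝ)) :=
    measurableSet_Icc.prod measurableSet_Icc
  have hSH : MeasurableSet (Icc 0 T ×ˢ Ioc 0 t : Set (ℝ×ℝ)) :=
    measurableSet_Icc.prod measurableSet_Ioc
  -- Ψ measurability
  have hUncΨ : Measurable (Function.uncurry fun (v : ℝ) (p : ℝ × ℝ) =>
      if (0 ≤ p.1 ∧ p.1 < v) ∧ (v < p.2 ∧ p.2 ≤ T) then α v p.2 else 0) := by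
    have : (Function.uncurry fun (v : ℝ) (p : ℝ × ℝ) =>
        if (0 ≤ p.1 ∧ p.1 < v) ∧ (v < p.2 ∧ p.2 ≤ T) then α v p.2 else 0)
        = fun q : ℝ × (ℝ × ℝ) =>
          if (0 ≤ q.2.1 ∧ q.2.1 < q.1) ∧ (q.1 < q.2.2 ∧ q.2.2 ≤ T) then α q.1 q.2.2 else 0 :=
      rfl
    rw [this]
    have m1 : Measurable fun q : ℝ × (ℝ × ℝ) => q.2.1 := measurable_fst.comp measurable_snd
    have m2 : Measurable fun q : ℝ × (ℝ × ℝ) => q.1 := measurable_fst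
    have m3 : Measurable fun q : ℝ × (ℝ × ℝ) => q.2.2 := measurable_snd.comp measurable_snd
    exact Measurable.ite
      (((measurableSet_le measurable_const m1).inter (measurableSet_lt m1 m2)).inter
        ((measurableSet_lt m2 m3).inter (measurableSet_le m3 measurable_const)))
      (hαmeas.comp (m2.prodMk m3)) measurable_const
  have hΨbdd : ∀ v (p : ℝ × ℝ),
      |if (0 ≤ p.1 ∧ p.1 < v) ∧ (v < p.2 ∧ p.2 ≤ T) then α v p.2 else 0| ≤ Cα := by
    intro v p
    split
    · exact hαbdd v p.2
    · simpa using hCα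
  -- αbar representation
  have hαbar_eq : ∀ v, αbar v = ∫ p, (if (0 ≤ p.1 ∧ p.1 < v) ∧ (v < p.2 ∧ p.2 ≤ T)
      then α v p.2 else 0) ∂μ := by
    intro v
    rw [hαbar, ← integral_indicator (measurableSet_Ico.prod measurableSet_Ioc)]
    congr 1
    ext p
    simp [Set.indicator_apply, Set.mem_prod, Set.mem_Ico, Set.mem_Ioc]
  -- Fubini
  have hFswap : (∫ v in Ioc 0 t, (∫ p, (if (0 ≤ p.1 ∧ p.1 < v) ∧ (v < p.2 ∧ p.2 ≤ T)
        then α v p.2 else 0) ∂μ) ∂ν)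
      = ∫ p, (∫ v in Ioc 0 t, (if (0 ≤ p.1 ∧ p.1 < v) ∧ (v < p.2 ∧ p.2 ≤ T)
        then α v p.2 else 0) ∂ν) ∂μ :=
    integral_integral_swap
      (bdd_integrable hUncΨ.aestronglyMeasurable (fun q => hΨbdd q.1 q.2))
  -- integrabilities of the four μ-integrands
  have hGν : StronglyMeasurable fun u => ∫ v in Ioc 0 t, α v u ∂ν :=
    StronglyMeasurable.integral_prod_left hαmeas.stronglyMeasurable
  have hgtsm : AEStronglyMeasurable (fun p : ℝ × ℝ => g t p.2) μ := by
    have : (fun p : ℝ × ℝ => g t p.2) = fun p => g₀ p.2 + ∫ v in Ioc 0 t, α v p.2 ∂ν :=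
      funext fun p => hg t p.2
    rw [this]
    exact ((hg₀meas.comp measurable_snd).stronglyMeasurable.add
      (hGν.comp_measurable measurable_snd)).aestronglyMeasurable
  have hind_bdd : ∀ (S : Set (ℝ × ℝ)) (F : ℝ × ℝ → ℝ) (C : ℝ), 0 ≤ C → (∀ p, |F p| ≤ C) →
      ∀ p, |S.indicator F p| ≤ C := by
    intro S F C hC hF p
    by_cases h : p ∈ S
    · rw [Set.indicator_of_mem h]; exact hF p
    · rw [Set.indicator_of_notMem h]; simpa using hC
  have intE : Integrable ((Icc 0 t ×ˢ Ioc t T).indicator fun p : ℝ × ℝ => g t p.2) μ :=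
    bdd_integrable (hgtsm.indicator hSE)
      (hind_bdd _ _ _ (add_nonneg hD₀ hCν) (fun p => hgbdd t p.2))
  have hgmsm : StronglyMeasurable gm := by
    have hrep : gm = fun u => g₀ u + ∫ v, (if 0 < v ∧ v < u then α v u else 0) ∂ν := by
      funext u
      rw [hgm u]
      congr 1
      rw [← integral_indicator measurableSet_Ioo]
      congr 1
      ext v
      simp [Set.indicator_apply, Set.mem_Ioo]
    rw [hrep]
    refine hg₀meas.stronglyMeasurable.add ?_
    refine StronglyMeasurable.integral_prod_right
      (f := fun (u v : ℝ) => if 0 < v ∧ v < u then α v u else 0) ?_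
    have : (Function.uncurry fun (u v : ℝ) => if 0 < v ∧ v < u then α v u else 0)
        = fun q : ℝ × ℝ => if 0 < q.2 ∧ q.2 < q.1 then α q.2 q.1 else 0 := rfl
    rw [this]
    exact (Measurable.ite
      ((measurableSet_lt measurable_const measurable_snd).inter
        (measurableSet_lt measurable_snd measurable_fst))
      (hαmeas.comp (measurable_snd.prodMk measurable_fst)) measurable_const).stronglyMeasurable
  have intH : Integrable ((Icc 0 T ×ˢ Ioc 0 t).indicator fun p : ℝ × ℝ => gm p.2) μ :=
    bdd_integrable
      (((hgmsm.comp_measurable measurable_snd).aestronglyMeasurable).indicator hSH)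
      (hind_bdd _ _ _ (add_nonneg hD₀ hCν) (fun p => hgmbdd p.2))
  have hgjsm : StronglyMeasurable (fun p : ℝ × ℝ => g p.1 p.2) := by
    have hrep : (fun p : ℝ × ℝ => g p.1 p.2)
        = fun p => g₀ p.2 + ∫ v, (if 0 < v ∧ v ≤ p.1 then α v p.2 else 0) ∂ν := by
      funext p
      rw [hg]
      congr 1
      rw [← integral_indicator measurableSet_Ioc]
      congr 1
      ext v
      simp [Set.indicator_apply, Set.mem_Ioc]
    rw [hrep]
    refine (hg₀meas.comp measurable_snd).stronglyMeasurable.add ?_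
    refine StronglyMeasurable.integral_prod_right
      (f := fun (p : ℝ × ℝ) (v : ℝ) => if 0 < v ∧ v ≤ p.1 then α v p.2 else 0) ?_
    have : (Function.uncurry fun (p : ℝ × ℝ) (v : ℝ) => if 0 < v ∧ v ≤ p.1 then α v p.2 else 0)
        = fun q : (ℝ × ℝ) × ℝ => if 0 < q.2 ∧ q.2 ≤ q.1.1 then α q.2 q.1.2 else 0 := rfl
    rw [this]
    exact (Measurable.ite
      ((measurableSet_lt measurable_const measurable_snd).inter
        (measurableSet_le measurable_snd (measurable_fst.comp measurable_fst)))
      (hαmeas.comp (measurable_snd.prodMk (measurable_snd.comp measurable_fst)))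
      measurable_const).stronglyMeasurable
  have intG : Integrable ((Icc 0 t ×ˢ Icc 0 T).indicator
      fun p : ℝ × ℝ => if p.1 < p.2 then g p.1 p.2 else 0) μ := by
    refine bdd_integrable
      (((StronglyMeasurable.ite (measurableSet_lt measurable_fst measurable_snd) hgjsm
        stronglyMeasurable_const).aestronglyMeasurable).indicator hSG)
      (hind_bdd _ _ (D₀ + Cα * (ν univ).toReal) (add_nonneg hD₀ hCν) (fun p => ?_))
    split
    · exact hgbdd p.1 p.2
    · simpa using add_nonneg hD₀ hCν
  have intΦ : Integrable (fun p : ℝ × ℝ => ∫ v in Ioc 0 t,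
      (if (0 ≤ p.1 ∧ p.1 < v) ∧ (v < p.2 ∧ p.2 ≤ T) then α v p.2 else 0) ∂ν) μ := by
    refine bdd_integrable ?_ (C := Cα * (ν univ).toReal)
      (fun p => bdd_abs_setIntegral ν _ hCα (fun v => hΨbdd v p) _)
    exact (StronglyMeasurable.integral_prod_left (μ := ν.restrict (Ioc 0 t))
      hUncΨ.stronglyMeasurable).aestronglyMeasurable
  -- the key pointwise identity
  have main : ∀ p : ℝ × ℝ, p ∈ (Icc 0 T ×ˢ Icc 0 T : Set (ℝ×ℝ)) → p.1 < p.2 →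
      (Icc 0 t ×ˢ Ioc t T).indicator (fun p : ℝ × ℝ => g t p.2) p
        + (Icc 0 T ×ˢ Ioc 0 t).indicator (fun p : ℝ × ℝ => gm p.2) p
      = (Icc 0 t ×ˢ Icc 0 T).indicator
          (fun p : ℝ × ℝ => if p.1 < p.2 then g p.1 p.2 else 0) p
        + ∫ v in Ioc 0 t, (if (0 ≤ p.1 ∧ p.1 < v) ∧ (v < p.2 ∧ p.2 ≤ T)
            then α v p.2 else 0) ∂ν := by
    rintro ⟨s, u⟩ ⟨⟨hs0, hsT⟩, hu0, huT⟩ hsu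
    simp only at hs0 hsT hu0 huT hsu ⊢
    have hΦeq : (∫ v in Ioc 0 t, (if (0 ≤ s ∧ s < v) ∧ (v < u ∧ u ≤ T)
        then α v u else 0) ∂ν) = ∫ v in Ioc 0 t ∩ Ioo s u, α v u ∂ν := by
      have : (fun v => if (0 ≤ s ∧ s < v) ∧ (v < u ∧ u ≤ T) then α v u else 0)
          = fun v => (Ioo s u).indicator (fun v => α v u) v := by
        funext v
        simp [Set.indicator_apply, Set.mem_Ioo, hs0, huT]
      rw [this, setIntegral_indicator measurableSet_Ioo]
    by_cases hut : t < u
    · by_cases hst : s ≤ t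
      · have hmemE : ((s, u) : ℝ × ℝ) ∈ (Icc 0 t ×ˢ Ioc t T : Set (ℝ×ℝ)) :=
          ⟨⟨hs0, hst⟩, hut, huT⟩
        have hmemG : ((s, u) : ℝ × ℝ) ∈ (Icc 0 t ×ˢ Icc 0 T : Set (ℝ×ℝ)) :=
          ⟨⟨hs0, hst⟩, hu0, huT⟩
        have hnotH : ((s, u) : ℝ × ℝ) ∉ (Icc 0 T ×ˢ Ioc 0 t : Set (ℝ×ℝ)) := by
          rintro ⟨-, -, h⟩
          exact absurd h (not_le.mpr hut)
        rw [Set.indicator_of_mem hmemE, Set.indicator_of_mem hmemG,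
          Set.indicator_of_notMem hnotH, hΦeq]
        have hset : Ioc 0 t ∩ Ioo s u = Ioc s t := by
          ext v
          simp only [Set.mem_inter_iff, Set.mem_Ioc, Set.mem_Ioo]
          constructor
          · rintro ⟨⟨-, h2⟩, h3, -⟩; exact ⟨h3, h2⟩
          · rintro ⟨h1, h2⟩; exact ⟨⟨hs0.trans_lt h1, h2⟩, h1, h2.trans_lt hut⟩
        rw [hset, if_pos hsu, hg, hg]
        have : (∫ v in Ioc 0 t, α v u ∂ν)
            = (∫ v in Ioc 0 s, α v u ∂ν) + ∫ v in Ioc s t, α v u ∂ν := by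
          rw [← Ioc_union_Ioc_eq_Ioc hs0 hst,
            setIntegral_union (Ioc_disjoint_Ioc_of_le le_rfl) measurableSet_Ioc
              (hIntαV u _) (hIntαV u _)]
        rw [this]; ring
      · push_neg at hst
        have hnotE : ((s, u) : ℝ × ℝ) ∉ (Icc 0 t ×ˢ Ioc t T : Set (ℝ×ℝ)) := by
          rintro ⟨⟨-, h⟩, -⟩
          exact absurd h (not_le.mpr hst)
        have hnotG : ((s, u) : ℝ × ℝ) ∉ (Icc 0 t ×ˢ Icc 0 T : Set (ℝ×ℝ)) := by
          rintro ⟨⟨-, h⟩, -⟩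
          exact absurd h (not_le.mpr hst)
        have hnotH : ((s, u) : ℝ × ℝ) ∉ (Icc 0 T ×ˢ Ioc 0 t : Set (ℝ×ℝ)) := by
          rintro ⟨-, -, h⟩
          exact absurd h (not_le.mpr hut)
        have hset : Ioc 0 t ∩ Ioo s u = ∅ := by
          ext v
          simp only [Set.mem_inter_iff, Set.mem_Ioc, Set.mem_Ioo, Set.mem_empty_iff_false,
            iff_false, not_and]
          rintro ⟨-, h2⟩ h3
          exact absurd (h3.trans_le h2) (not_lt.mpr hst.le)
        rw [Set.indicator_of_notMem hnotE, Set.indicator_of_notMem hnotG,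
          Set.indicator_of_notMem hnotH, hΦeq, hset]
        simp
    · push_neg at hut
      have hst : s ≤ t := hsu.le.trans hut
      have hu0' : 0 < u := hs0.trans_lt hsu
      have hnotE : ((s, u) : ℝ × ℝ) ∉ (Icc 0 t ×ˢ Ioc t T : Set (ℝ×ℝ)) := by
        rintro ⟨-, h, -⟩
        exact absurd h (not_lt.mpr hut)
      have hmemH : ((s, u) : ℝ × ℝ) ∈ (Icc 0 T ×ˢ Ioc 0 t : Set (ℝ×ℝ)) :=
        ⟨⟨hs0, hsT⟩, hu0', hut⟩
      have hmemG : ((s, u) : ℝ × ℝ) ∈ (Icc 0 t ×ˢ Icc 0 T : Set (ℝ×ℝ)) :=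
        ⟨⟨hs0, hst⟩, hu0, huT⟩
      rw [Set.indicator_of_notMem hnotE, Set.indicator_of_mem hmemH,
        Set.indicator_of_mem hmemG, hΦeq, if_pos hsu]
      have hset : Ioc 0 t ∩ Ioo s u = Ioo s u := by
        refine Set.inter_eq_self_of_subset_right (fun v hv => ?_)
        exact ⟨hs0.trans_lt hv.1, hv.2.le.trans hut⟩
      rw [hset, hg, hgm]
      have : (∫ v in Ioo 0 u, α v u ∂ν)
          = (∫ v in Ioc 0 s, α v u ∂ν) + ∫ v in Ioo s u, α v u ∂ν := by
        rw [← Ioc_union_Ioo_eq_Ioo hs0 hsu,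
          setIntegral_union ?_ measurableSet_Ioo (hIntαV u _) (hIntαV u _)]
        rw [Set.disjoint_left]
        rintro v ⟨-, h1⟩ ⟨h2, -⟩
        exact absurd (h2.trans_le h1) (lt_irrefl s)
      rw [this]; ring
  have hkey : ∀ᵐ p ∂μ,
      (Icc 0 t ×ˢ Ioc t T).indicator (fun p : ℝ × ℝ => g t p.2) p
        + (Icc 0 T ×ˢ Ioc 0 t).indicator (fun p : ℝ × ℝ => gm p.2) p
      = (Icc 0 t ×ˢ Icc 0 T).indicator
          (fun p : ℝ × ℝ => if p.1 < p.2 then g p.1 p.2 else 0) p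
        + ∫ v in Ioc 0 t, (if (0 ≤ p.1 ∧ p.1 < v) ∧ (v < p.2 ∧ p.2 ≤ T)
            then α v p.2 else 0) ∂ν := by
    rw [ae_iff]
    refine measure_mono_null (fun p hp => ?_) (measure_union_null hμsupp hμdiag)
    by_cases h1 : p ∈ (Icc 0 T ×ˢ Icc 0 T : Set (ℝ×ℝ))
    · by_cases h2 : p.2 ≤ p.1
      · exact Or.inr h2
      · exact absurd (main p h1 (lt_of_not_ge h2)) hp
    · exact Or.inl h1
  have hg_side : (∫ p in (Icc 0 t ×ˢ Ioc t T), g t p.2 ∂μ)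
        + (∫ p in (Icc 0 T ×ˢ Ioc 0 t), gm p.2 ∂μ)
      = (∫ p in (Icc 0 t ×ˢ Icc 0 T), (if p.1 < p.2 then g p.1 p.2 else 0) ∂μ)
        + ∫ v in Ioc 0 t, αbar v ∂ν := by
    -- conclusion
    calc (∫ p in (Icc 0 t ×ˢ Ioc t T), g t p.2 ∂μ) + (∫ p in (Icc 0 T ×ˢ Ioc 0 t), gm p.2 ∂μ)
        = ∫ p, ((Icc 0 t ×ˢ Ioc t T).indicator (fun p : ℝ × ℝ => g t p.2) p
            + (Icc 0 T ×ˢ Ioc 0 t).indicator (fun p : ℝ × ℝ => gm p.2) p) ∂μ := by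
          rw [integral_add intE intH, integral_indicator hSE, integral_indicator hSH]
      _ = ∫ p, ((Icc 0 t ×ˢ Icc 0 T).indicator
            (fun p : ℝ × ℝ => if p.1 < p.2 then g p.1 p.2 else 0) p
            + ∫ v in Ioc 0 t, (if (0 ≤ p.1 ∧ p.1 < v) ∧ (v < p.2 ∧ p.2 ≤ T)
              then α v p.2 else 0) ∂ν) ∂μ := integral_congr_ae hkey
      _ = (∫ p in (Icc 0 t ×ˢ Icc 0 T), (if p.1 < p.2 then g p.1 p.2 else 0) ∂μ)
            + ∫ v in Ioc 0 t, αbar v ∂ν := by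
          rw [integral_add intG intΦ, integral_indicator hSG]
          congr 1
          rw [← hFswap]
          refine setIntegral_congr_fun measurableSet_Ioc (fun v _ => ?_)
          exact (hαbar_eq v).symm

  -- properties of αbar needed on the f-side
  have hαbarm : AEStronglyMeasurable αbar (ν.restrict (Ioc 0 t)) := by
    have : αbar = fun v => ∫ p, (if (0 ≤ p.1 ∧ p.1 < v) ∧ (v < p.2 ∧ p.2 ≤ T)
        then α v p.2 else 0) ∂μ := funext hαbar_eq
    rw [this]
    exact (StronglyMeasurable.integral_prod_right hUncΨ.stronglyMeasurable).aestronglyMeasurable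
  have hαbarbdd : ∀ v, |αbar v| ≤ Cα * (μ univ).toReal := fun v => by
    rw [hαbar_eq v]
    exact bdd_abs_integral μ _ (fun p => hΨbdd v p)
  have hCa : 0 ≤ Ca := (abs_nonneg _).trans (habdd 0 0)
  haveI finIoc : ∀ x y : ℝ, IsFiniteMeasure (volume.restrict (Ioc x y)) := fun x y =>
    ⟨by rw [Measure.restrict_apply_univ]; exact measure_Ioc_lt_top⟩
  have haU : ∀ v, Measurable fun u => a v u := fun v =>
    hameas.comp (measurable_const.prodMk measurable_id)
  have haV : ∀ u, Measurable fun v => a v u := fun u =>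
    hameas.comp (measurable_id.prodMk measurable_const)
  have hIntaU : ∀ (v x y : ℝ), IntegrableOn (fun u => a v u) (Ioc x y) volume := fun v x y => by
    haveI := finIoc x y
    exact bdd_integrable (haU v).aestronglyMeasurable (habdd v)
  have hIntaV : ∀ (u : ℝ) (s : Set ℝ), IntegrableOn (fun v => a v u) s ν := fun u s =>
    bdd_integrable (haV u).aestronglyMeasurable (fun v => habdd v u)
  -- abar decomposition on Ioc 0 t
  have h1 : ∀ v ∈ Ioc 0 t, abar v
      = (∫ u in Ioc 0 t, a v u) + (∫ u in Ioc t T, a v u) := by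
    intro v hv
    rw [habar, intervalIntegral.integral_of_le (hv.2.trans htT)]
    rw [← Ioc_union_Ioc_eq_Ioc hv.2 htT,
      setIntegral_union (Ioc_disjoint_Ioc_of_le le_rfl) measurableSet_Ioc (hIntaU v v t) (hIntaU v t T)]
    have hz : ∫ u in Ioc 0 v, a v u = 0 := by
      rw [integral_Ioc_eq_integral_Ioo,
        setIntegral_congr_fun measurableSet_Ioo (fun u hu => ha0 v u hu.2)]
      simp
    have : (∫ u in Ioc 0 t, a v u) = (∫ u in Ioc 0 v, a v u) + (∫ u in Ioc v t, a v u) := by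
      rw [← Ioc_union_Ioc_eq_Ioc hv.1.le hv.2,
        setIntegral_union (Ioc_disjoint_Ioc_of_le le_rfl) measurableSet_Ioc (hIntaU v 0 v) (hIntaU v v t)]
    rw [this, hz, zero_add]
  -- Fubini
  have hFub1 : (∫ v in Ioc 0 t, (∫ u in Ioc t T, a v u) ∂ν)
      = ∫ u in Ioc t T, (∫ v in Ioc 0 t, a v u ∂ν) := by
    haveI := finIoc t T
    exact integral_integral_swap (f := fun v u => a v u)
      (μ := ν.restrict (Ioc 0 t)) (ν := volume.restrict (Ioc t T))
      (bdd_integrable hameas.aestronglyMeasurable (fun p => habdd p.1 p.2))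
  have hFub2 : (∫ v in Ioc 0 t, (∫ u in Ioc 0 t, a v u) ∂ν)
      = ∫ u in Ioc 0 t, (∫ v in Ioc 0 t, a v u ∂ν) := by
    haveI := finIoc 0 t
    exact integral_integral_swap (f := fun v u => a v u)
      (μ := ν.restrict (Ioc 0 t)) (ν := volume.restrict (Ioc 0 t))
      (bdd_integrable hameas.aestronglyMeasurable (fun p => habdd p.1 p.2))
  -- reduce inner ν-integral
  have h4 : ∀ u ∈ Ioc 0 t, (∫ v in Ioc 0 t, a v u ∂ν) = ∫ v in Ioc 0 u, a v u ∂ν := by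
    intro u hu
    have hz : ∫ v in Ioc u t, a v u ∂ν = 0 := by
      rw [setIntegral_congr_fun measurableSet_Ioc (fun v hv => ha0 v u hv.1)]
      simp
    rw [← Ioc_union_Ioc_eq_Ioc hu.1.le hu.2,
      setIntegral_union (Ioc_disjoint_Ioc_of_le le_rfl) measurableSet_Ioc (hIntaV u _) (hIntaV u _), hz,
      add_zero]
  have hX2 : (∫ v in Ioc 0 t, (∫ u in Ioc 0 t, a v u) ∂ν)
      = ∫ u in Ioc 0 t, (∫ v in Ioc 0 u, a v u ∂ν) :=
    hFub2.trans (setIntegral_congr_fun measurableSet_Ioc h4)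
  -- measurable representative of u ↦ ∫ v in Ioc 0 u, a v u ∂ν
  have hqsm : StronglyMeasurable fun u => ∫ v, (if 0 < v ∧ v ≤ u then a v u else 0) ∂ν := by
    apply StronglyMeasurable.integral_prod_right (f := fun u v => if 0 < v ∧ v ≤ u then a v u else 0)
    apply Measurable.stronglyMeasurable
    apply Measurable.ite
    · exact (measurableSet_lt measurable_const measurable_snd).inter
        (measurableSet_le measurable_snd measurable_fst)
    · exact hameas.comp (measurable_snd.prodMk measurable_fst)
    · exact measurable_const
  have hq_eq : ∀ u, (∫ v in Ioc 0 u, a v u ∂ν) = ∫ v, (if 0 < v ∧ v ≤ u then a v u else 0) ∂ν := by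
    intro u
    rw [← integral_indicator measurableSet_Ioc]
    congr 1
    ext v
    simp [Set.indicator_apply, Set.mem_Ioc]
  have hqInt : IntegrableOn (fun u => ∫ v in Ioc 0 u, a v u ∂ν) (Ioc 0 t) volume := by
    haveI := finIoc 0 t
    refine bdd_integrable ?_ (C := Ca * (ν univ).toReal)
      (fun u => bdd_abs_setIntegral ν _ hCa (fun v => habdd v u) _)
    refine AEStronglyMeasurable.congr hqsm.aestronglyMeasurable ?_
    exact Filter.Eventually.of_forall fun u => (hq_eq u).symm
  -- the interval integrals
  have hIntf₀ : ∀ x y : ℝ, IntegrableOn f₀ (Ioc x y) volume := fun x y => by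
    haveI := finIoc x y
    exact bdd_integrable hf₀meas.aestronglyMeasurable hf₀bdd
  have hF1sm : StronglyMeasurable fun u => ∫ v in Ioc 0 t, a v u ∂ν :=
    StronglyMeasurable.integral_prod_left (μ := ν.restrict (Ioc 0 t)) hameas.stronglyMeasurable
  have hF1int : ∀ x y : ℝ, IntegrableOn (fun u => ∫ v in Ioc 0 t, a v u ∂ν) (Ioc x y) volume := by
    intro x y
    haveI := finIoc x y
    exact bdd_integrable hF1sm.aestronglyMeasurable (C := Ca * (ν univ).toReal)
      (fun u => bdd_abs_setIntegral ν _ hCa (fun v => habdd v u) _)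
  have hA : (∫ u in t..T, f t u)
      = (∫ u in Ioc t T, f₀ u) + ∫ u in Ioc t T, (∫ v in Ioc 0 t, a v u ∂ν) := by
    rw [intervalIntegral.integral_of_le htT]
    simp only [hf]
    exact integral_add (hIntf₀ t T) (hF1int t T)
  have hB : (∫ u in (0:ℝ)..T, f₀ u) = (∫ u in Ioc 0 t, f₀ u) + (∫ u in Ioc t T, f₀ u) := by
    rw [intervalIntegral.integral_of_le (ht0.trans htT), ← Ioc_union_Ioc_eq_Ioc ht0 htT,
      setIntegral_union (Ioc_disjoint_Ioc_of_le le_rfl) measurableSet_Ioc (hIntf₀ 0 t) (hIntf₀ t T)]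
  have hC : (∫ u in (0:ℝ)..t, f u u)
      = (∫ u in Ioc 0 t, f₀ u) + ∫ u in Ioc 0 t, (∫ v in Ioc 0 u, a v u ∂ν) := by
    rw [intervalIntegral.integral_of_le ht0]
    simp only [hf]
    exact integral_add (hIntf₀ 0 t) hqInt
  -- D decomposition
  have hIntD1 : IntegrableOn (fun v => ∫ u in Ioc 0 t, a v u) (Ioc 0 t) ν := by
    haveI := finIoc 0 t
    refine bdd_integrable ?_ (fun v => bdd_abs_integral (volume.restrict (Ioc 0 t)) _ (habdd v))
    exact (StronglyMeasurable.integral_prod_right (ν := volume.restrict (Ioc 0 t))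
      hameas.stronglyMeasurable).aestronglyMeasurable
  have hIntD2 : IntegrableOn (fun v => ∫ u in Ioc t T, a v u) (Ioc 0 t) ν := by
    haveI := finIoc t T
    refine bdd_integrable ?_ (fun v => bdd_abs_integral (volume.restrict (Ioc t T)) _ (habdd v))
    exact (StronglyMeasurable.integral_prod_right (ν := volume.restrict (Ioc t T))
      hameas.stronglyMeasurable).aestronglyMeasurable
  have hIntαbar : IntegrableOn αbar (Ioc 0 t) ν := bdd_integrable hαbarm hαbarbdd
  have hD : (∫ v in Ioc 0 t, (abar v + αbar v) ∂ν)
      = (∫ v in Ioc 0 t, (∫ u in Ioc 0 t, a v u) ∂ν)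
        + (∫ v in Ioc 0 t, (∫ u in Ioc t T, a v u) ∂ν)
        + (∫ v in Ioc 0 t, αbar v ∂ν) := by
    have hIntD12 : IntegrableOn
        (fun v => (∫ u in Ioc 0 t, a v u) + ∫ u in Ioc t T, a v u) (Ioc 0 t) ν :=
      hIntD1.add hIntD2
    rw [setIntegral_congr_fun measurableSet_Ioc
      ((fun v hv => by dsimp only; rw [h1 v hv]) : EqOn (fun v => abar v + αbar v)
        (fun v => ((∫ u in Ioc 0 t, a v u) + (∫ u in Ioc t T, a v u)) + αbar v) (Ioc 0 t))]
    rw [integral_add hIntD12 hIntαbar, integral_add hIntD1 hIntD2]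
  linarith [hA, hB, hC, hD, hX2, hFub1, hg_side]
end

section
/- Let t ∈ [0,T]. Then ∫_t^T f(t,u) du = ∫_0^T f₀(u) du + ∫_{(0,t]} ā(v,T) ν(dv) − ∫_0^t f(u,u) du. (This is the Heath–Jarrow–Morton reformulation of the absolutely continuous part of the term structure, i.e. the f-part of the proof of Lemma 3.2, with the martingale driver X ≡ 0 and the Stieltjes measure of the increasing process A given by ν.) -/
open MeasureTheory Set

lemma hjm_int_of_bdd {α : Type*} [MeasurableSpace α] {μ : Measure α} [IsFiniteMeasure μ] {g : α → ℝ}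
    (hg : AEStronglyMeasurable g μ) (C : ℝ) (hC : ∀ x, |g x| ≤ C) :
    Integrable g μ :=
  Integrable.mono' (integrable_const C) hg (ae_of_all _ fun x => by simpa using hC x)

/-- Heath–Jarrow–Morton reformulation of the absolutely continuous part of the
term structure (the `f`-part of the proof of Lemma 3.2), with the martingale
driver `X ≡ 0` and the Stieltjes measure of the increasing process `A` given by `ν`. -/
theorem hjm_reformulation
    (T : ℝ) (hT : 0 < T)
    (ν : Measure ℝ) [IsFiniteMeasure ν]
    (hν0 : ν {0} = 0) (hνsupp : ν ((Icc 0 T)ᶜ) = 0)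
    (f₀ : ℝ → ℝ) (hf₀meas : Measurable f₀) (C₀ : ℝ) (hf₀bdd : ∀ u, |f₀ u| ≤ C₀)
    (a : ℝ → ℝ → ℝ) (hameas : Measurable (Function.uncurry a))
    (Ca : ℝ) (habdd : ∀ v u, |a v u| ≤ Ca)
    (ha0 : ∀ v u, u < v → a v u = 0)
    (f : ℝ → ℝ → ℝ) (hf : ∀ t u, f t u = f₀ u + ∫ v in Ioc 0 t, a v u ∂ν)
    (abar : ℝ → ℝ) (habar : ∀ v, abar v = ∫ u in v..T, a v u)
    (t : ℝ) (ht : t ∈ Icc 0 T) :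
    (∫ u in t..T, f t u)
      = (∫ u in (0:ℝ)..T, f₀ u) + (∫ v in Ioc 0 t, abar v ∂ν)
        - (∫ u in (0:ℝ)..t, f u u) := by
  obtain ⟨ht0, htT⟩ := ht
  set G : ℝ → ℝ := fun u => ∫ v in Ioc 0 t, a v u ∂ν with hG
  have hmeas_swap : Measurable fun p : ℝ × ℝ => a p.2 p.1 :=
    hameas.comp measurable_swap
  have hmeasu : ∀ u, Measurable fun v => a v u := fun u =>
    hameas.comp (measurable_id.prodMk measurable_const)
  have hmeasv : ∀ v, Measurable fun u => a v u := fun v =>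
    hameas.comp (measurable_const.prodMk measurable_id)
  -- integrability of v ↦ a v u against ν restricted anywhere
  have hintν : ∀ (u : ℝ) (s : Set ℝ), Integrable (fun v => a v u) (ν.restrict s) :=
    fun u s => hjm_int_of_bdd ((hmeasu u).aestronglyMeasurable) Ca (fun v => habdd v u)
  -- G is strongly measurable
  have hG_sm : StronglyMeasurable G :=
    StronglyMeasurable.integral_prod_right (hmeas_swap.stronglyMeasurable)
  -- G is bounded
  have hGbdd : ∀ u, |G u| ≤ Ca * ((ν.restrict (Ioc 0 t)) univ).toReal := by
    intro u
    rw [← Real.norm_eq_abs]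
    exact norm_integral_le_of_norm_le_const (ae_of_all _ fun v => by simpa using habdd v u)
  set M : ℝ := Ca * ((ν.restrict (Ioc 0 t)) univ).toReal with hM
  -- integrability of G and f₀ over volume-restricted intervals
  have hintG : ∀ s : Set ℝ, Integrable G ((volume : Measure ℝ).restrict (Ioc 0 T) |>.restrict s) := by
    intro s
    exact hjm_int_of_bdd hG_sm.aestronglyMeasurable M hGbdd
  have hintG' : ∀ b c : ℝ, Integrable G ((volume : Measure ℝ).restrict (Ioc b c)) := by
    intro b c
    exact hjm_int_of_bdd hG_sm.aestronglyMeasurable M hGbdd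
  have hintf₀ : ∀ b c : ℝ, Integrable f₀ ((volume : Measure ℝ).restrict (Ioc b c)) := by
    intro b c
    exact hjm_int_of_bdd hf₀meas.aestronglyMeasurable C₀ hf₀bdd
  have hinta : ∀ v b c : ℝ, Integrable (fun u => a v u) ((volume : Measure ℝ).restrict (Ioc b c)) := by
    intro v b c
    exact hjm_int_of_bdd (hmeasv v).aestronglyMeasurable Ca (habdd v)
  -- E1
  have E1 : (∫ u in t..T, f t u)
      = (∫ u in Ioc t T, f₀ u) + (∫ u in Ioc t T, G u) := by
    rw [intervalIntegral.integral_of_le htT]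
    have : (∫ u in Ioc t T, f t u) = ∫ u in Ioc t T, (f₀ u + G u) := by
      refine setIntegral_congr_fun measurableSet_Ioc (fun u _ => ?_)
      rw [hf t u]
    rw [this, integral_add (hintf₀ t T) (hintG' t T)]
  -- For u ∈ Ioc 0 t, ∫_{Ioc 0 u} a v u ∂ν = G u
  have hfdiag : ∀ u ∈ Ioc 0 t, (∫ v in Ioc 0 u, a v u ∂ν) = G u := by
    intro u hu
    have hsplit : Ioc (0:ℝ) u ∪ Ioc u t = Ioc 0 t := Ioc_union_Ioc_eq_Ioc hu.1.le hu.2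
    have hzero : (∫ v in Ioc u t, a v u ∂ν) = 0 := by
      have : ∀ v ∈ Ioc u t, a v u = 0 := fun v hv => ha0 v u hv.1
      rw [setIntegral_congr_fun measurableSet_Ioc this, integral_zero]
    have step : G u = ∫ v in Ioc (0:ℝ) u ∪ Ioc u t, a v u ∂ν := by rw [hsplit]
    rw [step,
      setIntegral_union (Ioc_disjoint_Ioc_of_le le_rfl) measurableSet_Ioc (hintν u _) (hintν u _),
      hzero, add_zero]
  -- E2
  have E2 : (∫ u in (0:ℝ)..t, f u u)
      = (∫ u in Ioc 0 t, f₀ u) + (∫ u in Ioc 0 t, G u) := by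
    rw [intervalIntegral.integral_of_le ht0]
    have : (∫ u in Ioc (0:ℝ) t, f u u) = ∫ u in Ioc (0:ℝ) t, (f₀ u + G u) := by
      refine setIntegral_congr_fun measurableSet_Ioc (fun u hu => ?_)
      rw [hf u u, hfdiag u hu]
    rw [this, integral_add (hintf₀ 0 t) (hintG' 0 t)]
  -- E4 : additivity of f₀ integral
  have E4 : (∫ u in (0:ℝ)..T, f₀ u)
      = (∫ u in Ioc 0 t, f₀ u) + (∫ u in Ioc t T, f₀ u) := by
    rw [intervalIntegral.integral_of_le (ht0.trans htT),
      ← Ioc_union_Ioc_eq_Ioc ht0 htT,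
      setIntegral_union (Ioc_disjoint_Ioc_of_le le_rfl) measurableSet_Ioc (hintf₀ 0 t) (hintf₀ t T)]
  -- E3 : Fubini
  have E3 : (∫ u in Ioc 0 t, G u) + (∫ u in Ioc t T, G u)
      = ∫ v in Ioc 0 t, abar v ∂ν := by
    have hGadd : (∫ u in Ioc 0 t, G u) + (∫ u in Ioc t T, G u) = ∫ u in Ioc 0 T, G u := by
      rw [← Ioc_union_Ioc_eq_Ioc ht0 htT,
        setIntegral_union (Ioc_disjoint_Ioc_of_le le_rfl) measurableSet_Ioc (hintG' 0 t) (hintG' t T)]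
    rw [hGadd]
    have hprodint : Integrable (Function.uncurry fun u v => a v u)
        (((volume : Measure ℝ).restrict (Ioc 0 T)).prod (ν.restrict (Ioc 0 t))) := by
      exact hjm_int_of_bdd hmeas_swap.aestronglyMeasurable Ca (fun p => habdd p.2 p.1)
    have hswap := integral_integral_swap (f := fun u v => a v u)
      (μ := (volume : Measure ℝ).restrict (Ioc 0 T)) (ν := ν.restrict (Ioc 0 t)) hprodint
    rw [hG]
    rw [hswap]
    refine setIntegral_congr_fun measurableSet_Ioc (fun v hv => ?_)
    have hvT : v ≤ T := hv.2.trans htT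
    have hsplit : Ioc (0:ℝ) v ∪ Ioc v T = Ioc 0 T := Ioc_union_Ioc_eq_Ioc hv.1.le hvT
    have hzero : (∫ u in Ioc (0:ℝ) v, a v u) = 0 := by
      rw [integral_Ioc_eq_integral_Ioo]
      rw [setIntegral_congr_fun measurableSet_Ioo (fun u hu => ha0 v u hu.2), integral_zero]
    rw [← hsplit,
      setIntegral_union (Ioc_disjoint_Ioc_of_le le_rfl) measurableSet_Ioc (hinta v 0 v) (hinta v v T),
      hzero, zero_add, habar v, intervalIntegral.integral_of_le hvT]
  rw [E1, E2, E4]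
  linarith [E3]
end
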